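/- Let A, B : [0,∞) → ℝ be continuous functions converging respectively to limits A₀ and B₀ as t → +∞, with A₀ ≠ 0. Let z : [0,∞) → ℝ be a bounded differentiable function satisfying ż(t) = A(t)z(t) + B(t) for all t ≥ 0. Then z(t) converges to −B₀/A₀ as t → +∞. -/

import Mathlib

open Filter

open Set Topology


lemma escape_aux {g g' : ℝ → ℝ} {a β c : ℝ}
    (hg : ∀ t ≥ a, HasDerivAt g (g' t) t)
    (hc : 0 < c)
    (H : ∀ t ≥ a, β ≤ g t → c ≤ g' t)
    {b : ℝ} (hb : a ≤ b) (hgb : β ≤ g b) :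
    ∀ t ≥ b, β + c * (t - b) ≤ g t := by
  have step1 : ∀ t ≥ b, β ≤ g t := by
    by_contra hcon
    push_neg at hcon
    obtain ⟨t₂, ht₂b, ht₂⟩ := hcon
    set S : Set ℝ := {t | b ≤ t ∧ g t < β} with hS
    have hne : S.Nonempty := ⟨t₂, ht₂b, ht₂⟩
    have hbdd : BddBelow S := ⟨b, fun x hx => hx.1⟩
    set T := sInf S with hT
    have hTb : b ≤ T := le_csInf hne fun x hx => hx.1
    have hTa : a ≤ T := hb.trans hTb
    have hlow : ∀ s, b ≤ s → s < T → β ≤ g s := fun s hs hsT =>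
      le_of_not_gt fun h => (csInf_le hbdd ⟨hs, h⟩).not_gt hsT
    have hgT : β ≤ g T := by
      rcases eq_or_lt_of_le hTb with h | h
      · rwa [← h]
      · have hcont : ContinuousWithinAt g (Ico b T) T :=
          ((hg T hTa).continuousAt).continuousWithinAt
        have hTmem : T ∈ closure (Ico b T) := by
          rw [closure_Ico h.ne]; exact ⟨hTb, le_rfl⟩
        have hnb : (𝓝[Ico b T] T).NeBot := mem_closure_iff_nhdsWithin_neBot.1 hTmem
        exact ge_of_tendsto hcont (eventually_nhdsWithin_of_forall
          fun s hs => hlow s hs.1 hs.2)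
    have hTS : T ∉ S := fun h => absurd h.2 (not_lt.2 hgT)
    have hclS : (𝓝[S] T).NeBot :=
      mem_closure_iff_nhdsWithin_neBot.1 (csInf_mem_closure hne hbdd)
    have hslope := hasDerivAt_iff_tendsto_slope.1 (hg T hTa)
    have hpos : ∀ᶠ t in 𝓝[≠] T, 0 < slope g T t :=
      hslope.eventually (eventually_gt_nhds (lt_of_lt_of_le hc (H T hTa hgT)))
    have hsub : 𝓝[S] T ≤ 𝓝[≠] T :=
      nhdsWithin_mono T (fun x hx hxT => hTS ((Set.mem_singleton_iff.1 hxT) ▸ hx))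
    have : ∀ᶠ t in 𝓝[S] T, False := by
      filter_upwards [hpos.filter_mono hsub, self_mem_nhdsWithin] with t ht hts
      have hTt : T < t := lt_of_le_of_ne (csInf_le hbdd hts)
        (fun h => hTS (h ▸ hts))
      rw [slope_def_field] at ht
      have h1 : (0:ℝ) < g t - g T := by
        rcases div_pos_iff.1 ht with ⟨h1, _⟩ | ⟨_, h2⟩
        · exact h1
        · linarith [sub_pos.2 hTt]
      have : β ≤ g t := by linarith
      exact absurd hts.2 (not_lt.2 this)
    exact this.exists.elim (fun _ h => h)
  intro t ht
  have hmono : MonotoneOn (fun s => g s - c * s) (Ici b) := by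
    apply monotoneOn_of_deriv_nonneg (convex_Ici b)
    · intro s hs
      exact ((hg s ((hb.trans hs))).sub
        (by simpa using (hasDerivAt_id s).const_mul c)).continuousAt.continuousWithinAt
    · intro s hs
      rw [interior_Ici] at hs
      exact ((hg s (hb.trans hs.le)).sub
        (by simpa using (hasDerivAt_id s).const_mul c)).differentiableAt.differentiableWithinAt
    · intro s hs
      rw [interior_Ici] at hs
      have hd : HasDerivAt (fun s => g s - c * s) (g' s - c) s :=
        (hg s (hb.trans hs.le)).sub (by simpa using (hasDerivAt_id s).const_mul c)
      rw [hd.deriv]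
      have := H s (hb.trans hs.le) (step1 s hs.le)
      linarith
  have := hmono (self_mem_Ici) (mem_Ici.2 ht) ht
  simp only at this
  have hβ := step1 t ht
  nlinarith [hgb]



lemma invariance_aux {g g' : ℝ → ℝ} {a β c : ℝ}
    (hg : ∀ t ≥ a, HasDerivAt g (g' t) t)
    (hc : 0 < c)
    (H : ∀ t ≥ a, β ≤ g t → g' t ≤ -c)
    {t₁ : ℝ} (h₁ : a ≤ t₁) (hg₁ : g t₁ ≤ β) :
    ∀ t ≥ t₁, g t ≤ β := by
  by_contra hcon
  push_neg at hcon
  obtain ⟨t₂, ht₂b, ht₂⟩ := hcon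
  set S : Set ℝ := {t | t₁ ≤ t ∧ β < g t} with hS
  have hne : S.Nonempty := ⟨t₂, ht₂b, ht₂⟩
  have hbdd : BddBelow S := ⟨t₁, fun x hx => hx.1⟩
  set T := sInf S with hT
  have hTb : t₁ ≤ T := le_csInf hne fun x hx => hx.1
  have hTa : a ≤ T := h₁.trans hTb
  have hlow : ∀ s, t₁ ≤ s → s < T → g s ≤ β := fun s hs hsT =>
    le_of_not_gt fun h => (csInf_le hbdd ⟨hs, h⟩).not_gt hsT
  have hclS : (𝓝[S] T).NeBot :=
    mem_closure_iff_nhdsWithin_neBot.1 (csInf_mem_closure hne hbdd)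
  have hcontT : ContinuousAt g T := (hg T hTa).continuousAt
  have hgTge : β ≤ g T :=
    ge_of_tendsto (hcontT.continuousWithinAt.tendsto)
      (eventually_nhdsWithin_of_forall (s := S) fun s hs => hs.2.le)
  have hgTle : g T ≤ β := by
    rcases eq_or_lt_of_le hTb with h | h
    · rwa [← h]
    · have hTmem : T ∈ closure (Ico t₁ T) := by
        rw [closure_Ico h.ne]; exact ⟨hTb, le_rfl⟩
      have hnb : (𝓝[Ico t₁ T] T).NeBot := mem_closure_iff_nhdsWithin_neBot.1 hTmem
      exact le_of_tendsto hcontT.continuousWithinAt.tendsto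
        (eventually_nhdsWithin_of_forall (s := Ico t₁ T) fun s hs => hlow s hs.1 hs.2)
  have hTS : T ∉ S := fun h => absurd h.2 (not_lt.2 hgTle)
  have hslope := hasDerivAt_iff_tendsto_slope.1 (hg T hTa)
  have hneg : ∀ᶠ t in 𝓝[≠] T, slope g T t < 0 :=
    hslope.eventually (eventually_lt_nhds (lt_of_le_of_lt (H T hTa hgTge) (by linarith)))
  have hsub : 𝓝[S] T ≤ 𝓝[≠] T :=
    nhdsWithin_mono T (fun x hx hxT => hTS ((Set.mem_singleton_iff.1 hxT) ▸ hx))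
  have : ∀ᶠ t in 𝓝[S] T, False := by
    filter_upwards [hneg.filter_mono hsub, self_mem_nhdsWithin] with t ht hts
    have hTt : T < t := lt_of_le_of_ne (csInf_le hbdd hts)
      (fun h => hTS (h ▸ hts))
    rw [slope_def_field] at ht
    have h1 : g t - g T < 0 := by
      rcases div_neg_iff.1 ht with ⟨_, h2⟩ | ⟨h1, _⟩
      · linarith [sub_pos.2 hTt]
      · exact h1
    have : g t ≤ β := by linarith
    exact absurd hts.2 (not_lt.2 this)
  exact this.exists.elim (fun _ h => h)

lemma reach_aux {g g' : ℝ → ℝ} {a β c : ℝ}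
    (hg : ∀ t ≥ a, HasDerivAt g (g' t) t)
    (hc : 0 < c)
    (H : ∀ t ≥ a, β ≤ g t → g' t ≤ -c)
    {t₀ : ℝ} (h₀ : a ≤ t₀) :
    ∃ t₁ ≥ t₀, g t₁ ≤ β := by
  by_contra hcon
  push_neg at hcon
  have hanti : AntitoneOn (fun s => g s + c * s) (Ici t₀) := by
    apply antitoneOn_of_deriv_nonpos (convex_Ici t₀)
    · intro s hs
      exact ((hg s (h₀.trans hs)).add
        (by simpa using (hasDerivAt_id s).const_mul c)).continuousAt.continuousWithinAt
    · intro s hs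
      rw [interior_Ici] at hs
      exact ((hg s (h₀.trans hs.le)).add
        (by simpa using (hasDerivAt_id s).const_mul c)).differentiableAt.differentiableWithinAt
    · intro s hs
      rw [interior_Ici] at hs
      have hd : HasDerivAt (fun s => g s + c * s) (g' s + c) s :=
        (hg s (h₀.trans hs.le)).add (by simpa using (hasDerivAt_id s).const_mul c)
      rw [hd.deriv]
      have := H s (h₀.trans hs.le) (hcon s hs.le).le
      linarith
  obtain ⟨t, htdef⟩ : ∃ t, t = t₀ + (g t₀ - β) / c := ⟨_, rfl⟩
  have h0β : β < g t₀ := hcon t₀ le_rfl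
  have hX : 0 ≤ (g t₀ - β) / c := div_nonneg (by linarith) hc.le
  have htt : t₀ ≤ t := by rw [htdef]; linarith
  have := hanti self_mem_Ici (mem_Ici.2 htt) htt
  simp only at this
  have hct : c * t = c * t₀ + (g t₀ - β) := by
    rw [htdef, mul_add, mul_div_cancel₀ _ hc.ne']
  have : g t ≤ β := by nlinarith
  exact absurd this (not_le.2 (hcon t htt))




/-- Any bounded solution of `ż = A z + B`, with `A → A₀ ≠ 0` and `B → B₀`,
converges to `-B₀/A₀`. -/
theorem bounded_solution_tendsto (A B : ℝ → ℝ) (A₀ B₀ : ℝ)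
    (hA : ContinuousOn A (Set.Ici 0)) (hB : ContinuousOn B (Set.Ici 0))
    (hA₀ : Tendsto A atTop (nhds A₀)) (hB₀ : Tendsto B atTop (nhds B₀))
    (hA₀ne : A₀ ≠ 0)
    (z : ℝ → ℝ) (hbdd : ∃ M : ℝ, ∀ t ≥ (0 : ℝ), |z t| ≤ M)
    (hode : ∀ t ≥ (0 : ℝ), HasDerivAt z (A t * z t + B t) t) :
    Tendsto z atTop (nhds (-B₀ / A₀)) := by
  obtain ⟨M, hM⟩ := hbdd
  set w : ℝ → ℝ := fun t => z t + B₀ / A₀ with hwdef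
  set C : ℝ → ℝ := fun t => B t - A t * (B₀ / A₀) with hCdef
  have hw : ∀ t ≥ (0:ℝ), HasDerivAt w (A t * w t + C t) t := by
    intro t ht
    have : HasDerivAt w (A t * z t + B t) t := (hode t ht).add_const _
    convert this using 1
    simp only [hwdef, hCdef]
    ring
  have hwbdd : ∀ t ≥ (0:ℝ), |w t| ≤ M + |B₀ / A₀| := by
    intro t ht
    calc |w t| ≤ |z t| + |B₀ / A₀| := abs_add_le _ _
      _ ≤ M + |B₀ / A₀| := by linarith [hM t ht]
  set M' : ℝ := M + |B₀ / A₀| with hM'def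
  have hC₀ : Tendsto C atTop (nhds 0) := by
    have : Tendsto (fun t => B t - A t * (B₀ / A₀)) atTop (nhds (B₀ - A₀ * (B₀ / A₀))) :=
      hB₀.sub (hA₀.mul_const _)
    simpa [mul_div_cancel₀ _ hA₀ne] using this
  clear_value w C M'
  have hw0 : Tendsto w atTop (nhds 0) := by
    rw [NormedAddCommGroup.tendsto_nhds_zero]
    intro ε hε
    have hCabs : Tendsto (fun t => |C t|) atTop (nhds 0) := by
      simpa using hC₀.abs
    rcases hA₀ne.lt_or_gt with hneg | hpos
    · -- A₀ < 0
      have hAev : ∀ᶠ t in atTop, A t ≤ A₀ / 2 :=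
        hA₀.eventually (eventually_le_nhds (by linarith))
      have hCev : ∀ᶠ t in atTop, |C t| ≤ ε * (-A₀) / 16 :=
        hCabs.eventually (eventually_le_nhds (by nlinarith [mul_pos hε (by linarith : (0:ℝ) < -A₀)]))
      obtain ⟨T, hT⟩ := ((hAev.and hCev).and (eventually_ge_atTop (0:ℝ))).exists_forall_of_atTop
      set g : ℝ → ℝ := fun t => w t * w t with hgdef
      set g' : ℝ → ℝ := fun t => (A t * w t + C t) * w t + w t * (A t * w t + C t) with hg'def
      have hg : ∀ t ≥ T, HasDerivAt g (g' t) t := fun t ht =>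
        (hw t (hT t ht).2).mul (hw t (hT t ht).2)
      clear_value g g'
      have hc : 0 < 3 * (-A₀) * ε ^ 2 / 16 := by nlinarith [mul_pos (mul_pos (by linarith : (0:ℝ) < -A₀) hε) hε]
      have H : ∀ t ≥ T, ε ^ 2 / 4 ≤ g t → g' t ≤ -(3 * (-A₀) * ε ^ 2 / 16) := by
        intro t ht hgt
        obtain ⟨⟨hAt, hCt⟩, ht0⟩ := hT t ht
        simp only [hgdef] at hgt
        have hw2 : ε / 2 ≤ |w t| := by
          by_contra hcc
          push_neg at hcc
          have h1 : |w t| * |w t| ≤ |w t| * (ε / 2) :=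
            mul_le_mul_of_nonneg_left hcc.le (abs_nonneg _)
          have h2 : ε * |w t| < ε * (ε / 2) := mul_lt_mul_of_pos_left hcc hε
          have h3 := abs_mul_abs_self (w t)
          linarith
        have k1 : A t * (w t * w t) ≤ A₀ / 2 * (w t * w t) :=
          mul_le_mul_of_nonneg_right hAt (mul_self_nonneg _)
        have k2 : w t * C t ≤ |w t| * (ε * (-A₀) / 16) := by
          calc w t * C t ≤ |w t * C t| := le_abs_self _
            _ = |w t| * |C t| := abs_mul _ _
            _ ≤ |w t| * (ε * (-A₀) / 16) := mul_le_mul_of_nonneg_left hCt (abs_nonneg _)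
        have k3 : |w t| * (ε * (-A₀) / 16) ≤ |w t| * (2 * |w t| * (-A₀) / 16) := by
          apply mul_le_mul_of_nonneg_left _ (abs_nonneg _)
          nlinarith [abs_nonneg (w t)]
        have k4 : |w t| * |w t| = w t * w t := abs_mul_abs_self _
        have k5 : 0 ≤ (-A₀) * (w t * w t - ε ^ 2 / 4) :=
          mul_nonneg (by linarith) (by linarith)
        simp only [hg'def]
        nlinarith [k1, k2, k3, k4, k5]
      obtain ⟨t₁, ht₁T, ht₁⟩ := reach_aux hg hc H (le_refl T)
      have hinv := invariance_aux hg hc H ht₁T ht₁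
      filter_upwards [eventually_ge_atTop t₁] with t ht
      have h2 : w t * w t ≤ ε ^ 2 / 4 := by simpa [hgdef] using hinv t ht
      rw [Real.norm_eq_abs]
      by_contra hcc
      push_neg at hcc
      have h1 : ε * ε ≤ ε * |w t| := mul_le_mul_of_nonneg_left hcc hε.le
      have h2' : ε * |w t| ≤ |w t| * |w t| := mul_le_mul_of_nonneg_right hcc (abs_nonneg _)
      have h3 := abs_mul_abs_self (w t)
      have h4 : 0 < ε * ε := mul_pos hε hε
      linarith
    · -- 0 < A₀
      have hAev : ∀ᶠ t in atTop, A₀ / 2 ≤ A t :=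
        hA₀.eventually (eventually_ge_nhds (by linarith))
      have hCev : ∀ᶠ t in atTop, |C t| ≤ ε * A₀ / 16 :=
        hCabs.eventually (eventually_le_nhds (by nlinarith [mul_pos hε hpos]))
      obtain ⟨T, hT⟩ := ((hAev.and hCev).and (eventually_ge_atTop (0:ℝ))).exists_forall_of_atTop
      have hc : 0 < ε * A₀ / 16 := by nlinarith [mul_pos hε hpos]
      have key : ∀ g : ℝ → ℝ, (∀ t ≥ T, HasDerivAt g (g t * 0) t) → True := fun _ _ => trivial
      have keypos : ∀ b ≥ T, w b < ε / 2 := by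
        by_contra hcon
        push_neg at hcon
        obtain ⟨b, hbT, hwb⟩ := hcon
        have H : ∀ t ≥ T, ε / 2 ≤ w t → ε * A₀ / 16 ≤ A t * w t + C t := by
          intro t ht hwt
          obtain ⟨⟨hAt, hCt⟩, ht0⟩ := hT t ht
          have k1 : A₀ / 2 * w t ≤ A t * w t :=
            mul_le_mul_of_nonneg_right hAt (by linarith)
          have k2 : A₀ / 2 * (ε / 2) ≤ A₀ / 2 * w t :=
            mul_le_mul_of_nonneg_left hwt (by linarith)
          have k3 : -(ε * A₀ / 16) ≤ C t := by have := neg_abs_le (C t); linarith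
          linarith
        have hesc := escape_aux (fun t ht => hw t (hT t ht).2) hc H hbT hwb
        obtain ⟨t, htdef⟩ : ∃ t, t = b + (M' + 1 - ε / 2) / (ε * A₀ / 16) := ⟨_, rfl⟩
        have hwbM : w b ≤ M' := (abs_le.1 (hwbdd b (hT b hbT).2)).2
        have hq : 0 ≤ (M' + 1 - ε / 2) / (ε * A₀ / 16) := div_nonneg (by linarith) hc.le
        have htb : b ≤ t := by rw [htdef]; linarith
        have h1 := hesc t htb
        have h2 : w t ≤ M' := (abs_le.1 (hwbdd t (le_trans (hT b hbT).2 htb))).2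
        have h3 : ε * A₀ / 16 * (t - b) = M' + 1 - ε / 2 := by
          rw [htdef]
          field_simp
          ring
        linarith
      have keyneg : ∀ b ≥ T, -w b < ε / 2 := by
        by_contra hcon
        push_neg at hcon
        obtain ⟨b, hbT, hwb⟩ := hcon
        have H : ∀ t ≥ T, ε / 2 ≤ -w t → ε * A₀ / 16 ≤ -(A t * w t + C t) := by
          intro t ht hwt
          obtain ⟨⟨hAt, hCt⟩, ht0⟩ := hT t ht
          have k1 : A t * w t ≤ A₀ / 2 * w t :=
            mul_le_mul_of_nonpos_right hAt (by linarith)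
          have k2 : A₀ / 2 * w t ≤ A₀ / 2 * (-(ε / 2)) :=
            mul_le_mul_of_nonneg_left (by linarith) (by linarith)
          have k3 : C t ≤ ε * A₀ / 16 := (le_abs_self (C t)).trans hCt
          linarith
        have hesc := escape_aux (g := fun t => -w t)
          (fun t ht => (hw t (hT t ht).2).neg) hc H hbT hwb
        obtain ⟨t, htdef⟩ : ∃ t, t = b + (M' + 1 - ε / 2) / (ε * A₀ / 16) := ⟨_, rfl⟩
        have hwbM : -w b ≤ M' := by
          have := (abs_le.1 (hwbdd b (hT b hbT).2)).1; linarith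
        have hq : 0 ≤ (M' + 1 - ε / 2) / (ε * A₀ / 16) := div_nonneg (by linarith) hc.le
        have htb : b ≤ t := by rw [htdef]; linarith
        have h1 := hesc t htb
        have h2 : -w t ≤ M' := by
          have := (abs_le.1 (hwbdd t (le_trans (hT b hbT).2 htb))).1; linarith
        have h3 : ε * A₀ / 16 * (t - b) = M' + 1 - ε / 2 := by
          rw [htdef]
          field_simp
          ring
        linarith
      filter_upwards [eventually_ge_atTop T] with t ht
      rw [Real.norm_eq_abs, abs_lt]
      constructor
      · linarith [keyneg t ht]
      · linarith [keypos t ht]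
  have : Tendsto (fun t => w t - B₀ / A₀) atTop (nhds (0 - B₀ / A₀)) := hw0.sub_const _
  simpa [hwdef, neg_div] using this
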